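/- Let θ be an invertible antisymmetric real 4×4 matrix, let D ≥ 4, and let E be a real 4×D matrix such that g := E Eᵀ is positive definite. Set e^σ := √(det θ · det g), G := e^{−σ} θ g θᵀ, and define the D×D matrix h := e^σ Eᵀ G E (the semiclassical matrix H^{ab} = −h^{ab}). Then h satisfies the cubic identity h³ − (1/2)·tr(h)·h² + e^{2σ} h = 0. (Equivalently, in the paper's notation, (H³)^{ad} − (1/2) H (H²)^{ad} + e^{2σ} H^{ad} = 0 with H = tr-contraction of H^{ab}; this expresses that e^{−σ}H^{ab} has the three eigenvalues {0, α², α^{−2}} characterizing a 4-dimensional brane.) -/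

import Mathlib

open Matrix

set_option maxHeartbeats 4000000

/-- Cayley–Hamilton for an explicit antisymmetric real `4×4` matrix: since the traces of
odd powers vanish, the characteristic polynomial is `λ⁴ − (tr A²/2) λ² + det A`. -/
lemma antisym_explicit_CH (p q r u v w : ℝ) :
    let A : Matrix (Fin 4) (Fin 4) ℝ := !![0,p,q,r; -p,0,u,v; -q,-u,0,w; -r,-v,-w,0]
    A*A*A*A - (((A*A).trace)/2) • (A*A) + A.det • (1 : Matrix (Fin 4) (Fin 4) ℝ) = 0 := by
  intro A
  have hdet : A.det = (p*w - q*v + r*u)^2 := by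
    rw [Matrix.det_succ_row_zero]; simp [A, Fin.sum_univ_succ, Matrix.det_fin_three, Fin.succAbove]
    ring
  rw [hdet]
  ext i j
  fin_cases i <;> fin_cases j <;>
    (simp [A, Matrix.mul_apply, Fin.sum_univ_four, Matrix.trace, Matrix.diag, Matrix.one_apply]; ring)

/-- Cayley–Hamilton for an arbitrary antisymmetric real `4×4` matrix. -/
lemma antisym_CH (A : Matrix (Fin 4) (Fin 4) ℝ) (hA : Aᵀ = -A) :
    A*A*A*A - (((A*A).trace)/2) • (A*A) + A.det • (1 : Matrix (Fin 4) (Fin 4) ℝ) = 0 := by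
  have he : ∀ i j, A j i = -A i j := fun i j => by
    have := congrFun (congrFun hA i) j; simpa using this
  have hAe : A = !![0, A 0 1, A 0 2, A 0 3; -(A 0 1), 0, A 1 2, A 1 3;
      -(A 0 2), -(A 1 2), 0, A 2 3; -(A 0 3), -(A 1 3), -(A 2 3), 0] := by
    ext i j
    fin_cases i <;> fin_cases j <;> simp <;>
      linarith [he 0 0, he 1 1, he 2 2, he 3 3, he 0 1, he 0 2, he 0 3, he 1 2, he 1 3, he 2 3]
  rw [hAe]
  exact antisym_explicit_CH (A 0 1) (A 0 2) (A 0 3) (A 1 2) (A 1 3) (A 2 3)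


open Matrix

open scoped MatrixOrder in
/-- The key 4×4 identity behind the brane cubic identity. -/
private lemma key (g θ : Matrix (Fin 4) (Fin 4) ℝ) (hθ : θᵀ = -θ) (hgpd : g.PosDef) :
    (θ*g*θᵀ)*g*(θ*g*θᵀ)*g*(θ*g*θᵀ) - ((g*(θ*g*θᵀ)).trace/2) • ((θ*g*θᵀ)*g*(θ*g*θᵀ))
      + (θ.det*g.det) • (θ*g*θᵀ) = 0 := by
  rw [hθ]
  obtain ⟨R, hRR, hRt, hRu⟩ : ∃ R : Matrix (Fin 4) (Fin 4) ℝ,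
      R * R = g ∧ Rᵀ = R ∧ IsUnit R.det := by
    refine ⟨CFC.sqrt g, CFC.sqrt_mul_sqrt_self g hgpd.posSemidef.nonneg, ?_, ?_⟩
    · have h1 : (CFC.sqrt g)ᴴ = CFC.sqrt g :=
        (CFC.sqrt_nonneg g).posSemidef.1
      rwa [conjTranspose_eq_transpose_of_trivial] at h1
    · have hdetg : (CFC.sqrt g).det * (CFC.sqrt g).det = g.det := by
        rw [← det_mul, CFC.sqrt_mul_sqrt_self g hgpd.posSemidef.nonneg]
      have hg0 : (0:ℝ) < g.det := hgpd.det_pos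
      refine isUnit_iff_ne_zero.mpr fun h0 => ?_
      rw [h0, mul_zero] at hdetg
      exact hg0.ne' hdetg.symm
  have hdetg : R.det * R.det = g.det := by rw [← det_mul, hRR]
  obtain ⟨A, hAdef⟩ : ∃ A : Matrix (Fin 4) (Fin 4) ℝ, A = R * θ * R := ⟨_, rfl⟩
  have hAt : Aᵀ = -A := by
    rw [hAdef, transpose_mul, transpose_mul, hRt, hθ]
    simp [Matrix.mul_assoc]
  have hdetA : A.det = θ.det * g.det := by
    rw [hAdef, det_mul, det_mul, ← hdetg]; ring
  obtain ⟨T, hTdef⟩ : ∃ T : Matrix (Fin 4) (Fin 4) ℝ, T = g * θ := ⟨_, rfl⟩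
  have hTR : T * R = R * A := by
    rw [hTdef, hAdef, ← hRR]; simp [Matrix.mul_assoc]
  have hpow : ∀ n : ℕ, T^n * R = R * A^n := by
    intro n
    induction n with
    | zero => simp
    | succ n ih =>
        calc T^(n+1) * R = T^n * (T * R) := by rw [pow_succ, Matrix.mul_assoc]
          _ = T^n * R * A := by rw [hTR, ← Matrix.mul_assoc]
          _ = R * A^(n+1) := by rw [ih, pow_succ, Matrix.mul_assoc]
  have htr : (T^2).trace = (A^2).trace := by
    have h1 : T^2 = R * (R * θ * R * R * θ) := by
      rw [pow_two, hTdef, ← hRR]; simp [Matrix.mul_assoc]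
    have h2 : (R * θ * R * R * θ) * R = A^2 := by rw [pow_two, hAdef]; simp [Matrix.mul_assoc]
    rw [h1, Matrix.trace_mul_comm, h2]
  have hCH : A^4 - (((A^2).trace)/2) • (A^2) + A.det • (1 : Matrix (Fin 4) (Fin 4) ℝ) = 0 := by
    have e4 : A^4 = A*A*A*A := by rw [pow_succ, pow_succ, pow_two]
    have e2 : A^2 = A*A := pow_two A
    rw [e4, e2]; exact antisym_CH A hAt
  have hW : (T^5 - ((T^2).trace/2) • T^3 + (θ.det*g.det) • T) * R = 0 := by
    have expand : (T^5 - ((T^2).trace/2) • T^3 + (θ.det*g.det) • T) * R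
        = R * (A * (A^4 - (((A^2).trace)/2) • (A^2) + A.det • 1)) := by
      rw [Matrix.add_mul, Matrix.sub_mul, Matrix.smul_mul, Matrix.smul_mul,
        hpow 5, hpow 3, show T * R = T^1 * R by rw [pow_one], hpow 1, htr, hdetA]
      simp only [Matrix.mul_add, Matrix.mul_sub, Matrix.mul_smul, Matrix.mul_one,
        pow_succ, pow_zero, Matrix.one_mul, Matrix.mul_assoc]
    rw [expand, hCH, Matrix.mul_zero, Matrix.mul_zero]
  have hW0 : T^5 - ((T^2).trace/2) • T^3 + (θ.det*g.det) • T = 0 := by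
    have hinv : R * R⁻¹ = 1 := Matrix.mul_nonsing_inv R hRu
    have h' := congrArg (fun M => M * R⁻¹) hW
    simp only [Matrix.zero_mul] at h'
    rw [Matrix.mul_assoc, hinv, Matrix.mul_one] at h'
    exact h'
  have e1 : (θ*g*(-θ))*g*(θ*g*(-θ))*g*(θ*g*(-θ)) = -(θ * T^5) := by
    rw [hTdef, pow_succ, pow_succ, pow_succ, pow_two]
    simp [Matrix.mul_assoc]
  have e2 : (θ*g*(-θ))*g*(θ*g*(-θ)) = θ * T^3 := by
    rw [hTdef, pow_succ, pow_two]
    simp [Matrix.mul_assoc]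
  have e3 : (g*(θ*g*(-θ))).trace = -((T^2).trace) := by
    rw [hTdef]
    have h5 : g*(θ*g*(-θ)) = -((g*θ)^2) := by rw [pow_two]; simp [Matrix.mul_assoc]
    rw [h5, trace_neg]
  have e4 : θ*g*(-θ) = -(θ * T) := by rw [hTdef]; simp [Matrix.mul_assoc]
  rw [e1, e2, e3, e4]
  have e5 : -(θ * T^5) - (-((T^2).trace)/2) • (θ * T^3) + (θ.det*g.det) • (-(θ*T))
      = -(θ * (T^5 - ((T^2).trace/2) • T^3 + (θ.det*g.det) • T)) := by
    rw [Matrix.mul_add, Matrix.mul_sub, Matrix.mul_smul, Matrix.mul_smul]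
    module
  rw [e5, hW0, Matrix.mul_zero, neg_zero]

theorem brane_cubic_identity
    (D : ℕ) (hD : 4 ≤ D)
    (θ : Matrix (Fin 4) (Fin 4) ℝ) (E : Matrix (Fin 4) (Fin D) ℝ)
    (g G : Matrix (Fin 4) (Fin 4) ℝ) (h : Matrix (Fin D) (Fin D) ℝ)
    (hθ : θᵀ = -θ) (hθu : IsUnit θ)
    (hgdef : g = E * Eᵀ) (hgpd : g.PosDef)
    (hG : G = (Real.sqrt (θ.det * g.det))⁻¹ • (θ * g * θᵀ))
    (hh : h = Real.sqrt (θ.det * g.det) • (Eᵀ * G * E)) :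
    h ^ 3 - (h.trace / 2) • h ^ 2 + (Real.sqrt (θ.det * g.det)) ^ 2 • h = 0 := by
  rcases eq_or_ne (Real.sqrt (θ.det * g.det)) 0 with hs | hs
  · rw [hh, hs, zero_smul]
    simp
  · have hpos : 0 < θ.det * g.det := Real.sqrt_ne_zero'.mp hs
    have hsq : (Real.sqrt (θ.det * g.det)) ^ 2 = θ.det * g.det := Real.sq_sqrt hpos.le
    have hhe : h = Eᵀ * (θ*g*θᵀ) * E := by
      rw [hh, hG, Matrix.mul_smul, Matrix.smul_mul, smul_smul, mul_inv_cancel₀ hs, one_smul]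
    have hmul : ∀ X Y : Matrix (Fin 4) (Fin 4) ℝ,
        (Eᵀ*X*E)*(Eᵀ*Y*E) = Eᵀ*(X*g*Y)*E := by
      intro X Y
      rw [hgdef]; simp only [Matrix.mul_assoc]
    have h2 : h^2 = Eᵀ*((θ*g*θᵀ)*g*(θ*g*θᵀ))*E := by
      rw [pow_two, hhe, hmul]
    have h3 : h^3 = Eᵀ*((θ*g*θᵀ)*g*(θ*g*θᵀ)*g*(θ*g*θᵀ))*E := by
      rw [pow_succ, h2, hhe, hmul]
    have htr : h.trace = (g*(θ*g*θᵀ)).trace := by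
      rw [hhe, Matrix.trace_mul_comm (Eᵀ*(θ*g*θᵀ)) E, ← Matrix.mul_assoc, ← hgdef]
    have hZ := key g θ hθ hgpd
    have h0 : Eᵀ * ((θ*g*θᵀ)*g*(θ*g*θᵀ)*g*(θ*g*θᵀ)
        - ((g*(θ*g*θᵀ)).trace/2) • ((θ*g*θᵀ)*g*(θ*g*θᵀ))
        + (θ.det*g.det) • (θ*g*θᵀ)) * E = 0 := by
      rw [hZ, Matrix.mul_zero, Matrix.zero_mul]
    rw [h3, h2, htr, hhe, hsq]
    rw [Matrix.mul_add, Matrix.mul_sub, Matrix.mul_smul, Matrix.mul_smul,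
      Matrix.add_mul, Matrix.sub_mul, Matrix.smul_mul, Matrix.smul_mul] at h0
    exact h0
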